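/- arXiv:1811.07883 — 2 statements merged into one kernel-verified Lean document; each statement's English description precedes it below -/
import Mathlib

section
/- For a uniformly random permutation π ∈ S_n and every k ≤ n, the k-profile P_k(π) converges in probability to the constant vector (1/k!,...,1/k!) ∈ ℝ^{k!} as n → ∞. -/
open Finset Equiv

/-- Number of occurrences of the pattern `σ ∈ S_k` in the permutation `π ∈ S_n`. -/
def patOcc {n k : ℕ} (π : Equiv.Perm (Fin n)) (σ : Equiv.Perm (Fin k)) : ℕ :=
  (Finset.univ.filter (fun a : Fin k → Fin n =>
    (∀ i j : Fin k, i < j → a i < a j) ∧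
    (∀ i j : Fin k, σ i < σ j ↔ π (a i) < π (a j)))).card

/-- Pattern density `P_σ(π) = N_σ(π) / C(n,k)`. -/
noncomputable def patDens {n k : ℕ} (π : Equiv.Perm (Fin n)) (σ : Equiv.Perm (Fin k)) : ℝ :=
  (patOcc π σ : ℝ) / (n.choose k : ℝ)

namespace ProfAux

variable {k n : ℕ}

/-- Standardization (induced pattern) of an injective tuple. -/
noncomputable def std (v : Fin k → Fin n) (hv : Function.Injective v) : Equiv.Perm (Fin k) :=
  Equiv.ofBijective
    (fun i => ((Finset.univ.image v).orderIsoOfFin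
        (by rw [Finset.card_image_of_injective _ hv, Finset.card_univ, Fintype.card_fin])).symm
        ⟨v i, Finset.mem_image_of_mem v (Finset.mem_univ i)⟩)
    (Finite.injective_iff_bijective.mp (fun i j h => by
      apply hv
      have := congrArg (fun x => (((Finset.univ.image v).orderIsoOfFin
        (by rw [Finset.card_image_of_injective _ hv, Finset.card_univ, Fintype.card_fin])) x).1) h
      simpa using this))

lemma std_lt (v : Fin k → Fin n) (hv : Function.Injective v) (i j : Fin k) :
    std v hv i < std v hv j ↔ v i < v j := by
  simp only [std, Equiv.ofBijective_apply]
  rw [OrderIso.lt_iff_lt]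
  exact Iff.rfl

lemma perm_eq_of_lt_iff (σ τ : Perm (Fin k)) (h : ∀ i j, σ i < σ j ↔ τ i < τ j) : σ = τ := by
  have hg : StrictMono (fun i => τ (σ.symm i)) := by
    intro i j hij
    have : σ (σ.symm i) < σ (σ.symm j) := by simpa using hij
    exact (h _ _).mp this
  have hid : StrictMono (id : Fin k → Fin k) := strictMono_id
  have hr : Set.range (fun i => τ (σ.symm i)) = Set.range (id : Fin k → Fin k) := by
    have : Function.Surjective (fun i => τ (σ.symm i)) :=
      τ.surjective.comp σ.symm.surjective
    simp [Set.range_eq_univ.mpr this]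
  haveI : WellFoundedLT (Fin k) := inferInstance
  have := (StrictMono.range_inj hg hid).mp hr
  ext i
  have := congrFun this (σ i)
  simp only [Equiv.symm_apply_apply, id_eq] at this
  exact congrArg Fin.val this.symm


/-- The set of permutations realizing pattern `σ` on the tuple `a`. -/
def patSet (σ : Perm (Fin k)) (a : Fin k → Fin n) : Finset (Perm (Fin n)) :=
  Finset.univ.filter (fun π => ∀ i j, σ i < σ j ↔ π (a i) < π (a j))

lemma mem_patSet {σ : Perm (Fin k)} {a : Fin k → Fin n} {π : Perm (Fin n)} :
    π ∈ patSet σ a ↔ ∀ i j, σ i < σ j ↔ π (a i) < π (a j) := by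
  simp [patSet]

lemma mem_patSet_iff_std {σ : Perm (Fin k)} {a : Fin k → Fin n} (ha : Function.Injective a)
    (π : Perm (Fin n)) :
    π ∈ patSet σ a ↔ std (π ∘ a) (π.injective.comp ha) = σ := by
  rw [mem_patSet]
  constructor
  · intro h
    exact perm_eq_of_lt_iff _ _ (fun i j => (std_lt _ _ i j).trans (h i j).symm)
  · intro h i j
    rw [← h]
    exact std_lt (⇑π ∘ a) (π.injective.comp ha) i j

lemma perm_comp_mem_patSet {σ : Perm (Fin k)} {a : Fin k → Fin n} {ρ : Perm (Fin k)}
    {c : Perm (Fin n)} (hc : ∀ i, c (a i) = a (ρ i)) (π : Perm (Fin n)) :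
    π * c ∈ patSet σ a ↔ π ∈ patSet (ρ.symm.trans σ) a := by
  simp only [mem_patSet, Equiv.trans_apply, Perm.mul_apply, hc]
  constructor
  · intro h i j
    have := h (ρ.symm i) (ρ.symm j)
    simpa using this
  · intro h i j
    have := h (ρ i) (ρ j)
    simpa using this


lemma card_patSet_eq {a : Fin k → Fin n} (ha : Function.Injective a)
    (σ σ' : Perm (Fin k)) : (patSet σ a).card = (patSet σ' a).card := by
  classical
  set ρ : Perm (Fin k) := (σ'.trans σ.symm).symm with hρ
  set c : Perm (Fin n) := ρ.viaEmbedding ⟨a, ha⟩ with hc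
  have hca : ∀ i, c (a i) = a (ρ i) := fun i => Perm.viaEmbedding_apply ρ ⟨a, ha⟩ i
  have hst : ρ.symm.trans σ = σ' := by
    ext i
    simp [hρ]
  have h1 : ∀ π : Perm (Fin n), π * c ∈ patSet σ a ↔ π ∈ patSet σ' a := by
    intro π
    rw [perm_comp_mem_patSet hca, hst]
  have key : ∀ x : Perm (Fin n), x * c⁻¹ ∈ patSet σ' a ↔ x ∈ patSet σ a := by
    intro x
    have e1 := h1 (x * c⁻¹)
    rw [inv_mul_cancel_right] at e1
    exact e1.symm
  have : patSet σ a = (patSet σ' a).map (Equiv.mulRight c).toEmbedding := by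
    ext x
    rw [Finset.mem_map_equiv]
    exact (key x).symm
  rw [this, Finset.card_map]

lemma card_inter_patSet_eq {a b : Fin k → Fin n} (ha : Function.Injective a)
    (hb : Function.Injective b) (hd : ∀ i j, a i ≠ b j)
    (σ τ σ' τ' : Perm (Fin k)) :
    (patSet σ a ∩ patSet τ b).card = (patSet σ' a ∩ patSet τ' b).card := by
  classical
  set ρ : Perm (Fin k) := (σ'.trans σ.symm).symm with hρ
  set ρ₂ : Perm (Fin k) := (τ'.trans τ.symm).symm with hρ₂
  set ca : Perm (Fin n) := ρ.viaEmbedding ⟨a, ha⟩ with hcadef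
  set cb : Perm (Fin n) := ρ₂.viaEmbedding ⟨b, hb⟩ with hcbdef
  set c : Perm (Fin n) := ca * cb with hcdef
  have hra : ∀ i, a i ∉ Set.range b := by
    rintro i ⟨j, hj⟩
    exact hd i j hj.symm
  have hrb : ∀ j, b j ∉ Set.range a := by
    rintro j ⟨i, hi⟩
    exact hd i j hi
  have hca : ∀ i, c (a i) = a (ρ i) := by
    intro i
    have h1 : cb (a i) = a i := Perm.viaEmbedding_apply_of_notMem ρ₂ ⟨b, hb⟩ _ (hra i)
    have h2 : ca (a i) = a (ρ i) := Perm.viaEmbedding_apply ρ ⟨a, ha⟩ i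
    simp [hcdef, Perm.mul_apply, h1, h2]
  have hcb : ∀ j, c (b j) = b (ρ₂ j) := by
    intro j
    have h1 : cb (b j) = b (ρ₂ j) := Perm.viaEmbedding_apply ρ₂ ⟨b, hb⟩ j
    have h2 : ca (b (ρ₂ j)) = b (ρ₂ j) :=
      Perm.viaEmbedding_apply_of_notMem ρ ⟨a, ha⟩ _ (hrb (ρ₂ j))
    simp [hcdef, Perm.mul_apply, h1, h2]
  have hsta : ρ.symm.trans σ = σ' := by
    ext i
    simp [hρ]
  have hstb : ρ₂.symm.trans τ = τ' := by
    ext i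
    simp [hρ₂]
  have h1 : ∀ π : Perm (Fin n), π * c ∈ patSet σ a ↔ π ∈ patSet σ' a := by
    intro π
    rw [perm_comp_mem_patSet hca, hsta]
  have h2 : ∀ π : Perm (Fin n), π * c ∈ patSet τ b ↔ π ∈ patSet τ' b := by
    intro π
    rw [perm_comp_mem_patSet hcb, hstb]
  have key : ∀ x : Perm (Fin n),
      x * c⁻¹ ∈ patSet σ' a ∩ patSet τ' b ↔ x ∈ patSet σ a ∩ patSet τ b := by
    intro x
    have e1 := h1 (x * c⁻¹)
    have e2 := h2 (x * c⁻¹)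
    rw [inv_mul_cancel_right] at e1 e2
    simp only [Finset.mem_inter]
    rw [← e1, ← e2]
  have : patSet σ a ∩ patSet τ b =
      (patSet σ' a ∩ patSet τ' b).map (Equiv.mulRight c).toEmbedding := by
    ext x
    rw [Finset.mem_map_equiv]
    exact (key x).symm
  rw [this, Finset.card_map]

lemma sum_card_patSet {a : Fin k → Fin n} (ha : Function.Injective a) :
    ∑ σ : Perm (Fin k), (patSet σ a).card = n.factorial := by
  classical
  have h := Finset.card_eq_sum_card_fiberwise
    (s := (Finset.univ : Finset (Perm (Fin n)))) (t := Finset.univ)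
    (f := fun π : Perm (Fin n) => std (⇑π ∘ a) (π.injective.comp ha)) (fun _ _ => Finset.mem_univ _)
  rw [Finset.card_univ, Fintype.card_perm, Fintype.card_fin] at h
  rw [h]
  apply Finset.sum_congr rfl
  intro σ _
  congr 1
  ext π
  rw [Finset.mem_filter, mem_patSet_iff_std ha]
  simp

lemma sum_card_inter_patSet {a b : Fin k → Fin n} (ha : Function.Injective a)
    (hb : Function.Injective b) :
    ∑ p : Perm (Fin k) × Perm (Fin k), (patSet p.1 a ∩ patSet p.2 b).card = n.factorial := by
  classical
  have h := Finset.card_eq_sum_card_fiberwise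
    (s := (Finset.univ : Finset (Perm (Fin n)))) (t := Finset.univ)
    (f := fun π : Perm (Fin n) => (std (⇑π ∘ a) (π.injective.comp ha), std (⇑π ∘ b) (π.injective.comp hb)))
    (fun _ _ => Finset.mem_univ _)
  rw [Finset.card_univ, Fintype.card_perm, Fintype.card_fin] at h
  rw [h]
  apply Finset.sum_congr rfl
  intro p _
  congr 1
  ext π
  rw [Finset.mem_inter, Finset.mem_filter, mem_patSet_iff_std ha, mem_patSet_iff_std hb,
    Prod.ext_iff]
  simp

lemma card_patSet_mul {a : Fin k → Fin n} (ha : Function.Injective a) (σ : Perm (Fin k)) :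
    (patSet σ a).card * k.factorial = n.factorial := by
  have h := sum_card_patSet ha
  calc (patSet σ a).card * k.factorial
      = ∑ _τ : Perm (Fin k), (patSet σ a).card := by
        rw [Finset.sum_const, Finset.card_univ, Fintype.card_perm, Fintype.card_fin,
          smul_eq_mul, mul_comm]
    _ = ∑ τ : Perm (Fin k), (patSet τ a).card :=
        Finset.sum_congr rfl (fun τ _ => card_patSet_eq ha σ τ)
    _ = n.factorial := h

lemma card_inter_patSet_mul {a b : Fin k → Fin n} (ha : Function.Injective a)
    (hb : Function.Injective b) (hd : ∀ i j, a i ≠ b j) (σ τ : Perm (Fin k)) :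
    (patSet σ a ∩ patSet τ b).card * (k.factorial * k.factorial) = n.factorial := by
  have h := sum_card_inter_patSet ha hb
  calc (patSet σ a ∩ patSet τ b).card * (k.factorial * k.factorial)
      = ∑ _p : Perm (Fin k) × Perm (Fin k), (patSet σ a ∩ patSet τ b).card := by
        rw [Finset.sum_const, Finset.card_univ, Fintype.card_prod, Fintype.card_perm,
          Fintype.card_fin, smul_eq_mul, mul_comm]
    _ = ∑ p : Perm (Fin k) × Perm (Fin k), (patSet p.1 a ∩ patSet p.2 b).card :=
        Finset.sum_congr rfl (fun p _ => card_inter_patSet_eq ha hb hd σ τ p.1 p.2)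
    _ = n.factorial := h


/-- The finset of strictly increasing `k`-tuples in `Fin n`. -/
def incrs (k n : ℕ) : Finset (Fin k → Fin n) :=
  Finset.univ.filter (fun a => ∀ i j : Fin k, i < j → a i < a j)

lemma strictMono_of_mem_incrs {a : Fin k → Fin n} (ha : a ∈ incrs k n) : StrictMono a := by
  rw [incrs, Finset.mem_filter] at ha
  exact fun i j hij => ha.2 i j hij

lemma card_incrs : (incrs k n).card = n.choose k := by
  classical
  haveI : WellFoundedLT (Fin k) := inferInstance
  have : (incrs k n).card = (Finset.powersetCard k (Finset.univ : Finset (Fin n))).card := by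
    apply Finset.card_bij (i := fun a _ => Finset.image a Finset.univ)
    · intro a ha
      rw [Finset.mem_powersetCard]
      refine ⟨Finset.subset_univ _, ?_⟩
      rw [Finset.card_image_of_injective _ (strictMono_of_mem_incrs ha).injective,
        Finset.card_univ, Fintype.card_fin]
    · intro a1 h1 a2 h2 heq
      have hr : Set.range a1 = Set.range a2 := by
        have := congrArg (fun s : Finset (Fin n) => (s : Set (Fin n))) heq
        simpa [Set.image_univ] using this
      exact ((strictMono_of_mem_incrs h1).range_inj (strictMono_of_mem_incrs h2)).mp hr
    · intro s hs
      rw [Finset.mem_powersetCard] at hs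
      refine ⟨⇑(s.orderEmbOfFin hs.2), ?_, ?_⟩
      · rw [incrs, Finset.mem_filter]
        exact ⟨Finset.mem_univ _, fun i j hij => (s.orderEmbOfFin hs.2).strictMono hij⟩
      · apply Finset.coe_injective
        simp [Set.image_univ, Finset.range_orderEmbOfFin]
  rw [this, Finset.card_powersetCard, Finset.card_univ, Fintype.card_fin]

lemma card_incrs_with (x : Fin n) :
    (((incrs k n).filter (fun a => ∃ i, a i = x)).card : ℕ) ≤ (n-1).choose (k-1) := by
  classical
  haveI : WellFoundedLT (Fin k) := inferInstance
  have hle : ((incrs k n).filter (fun a => ∃ i, a i = x)).card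
      ≤ (Finset.powersetCard (k-1) ((Finset.univ : Finset (Fin n)).erase x)).card := by
    apply Finset.card_le_card_of_injOn (f := fun a => (Finset.image a Finset.univ).erase x)
    · intro a ha
      rw [Finset.mem_coe, Finset.mem_filter] at ha
      obtain ⟨ha1, i, hi⟩ := ha
      rw [Finset.mem_coe, Finset.mem_powersetCard]
      constructor
      · exact Finset.erase_subset_erase x (Finset.subset_univ _)
      · rw [Finset.card_erase_of_mem (hi ▸ Finset.mem_image_of_mem a (Finset.mem_univ i)),
          Finset.card_image_of_injective _ (strictMono_of_mem_incrs ha1).injective,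
          Finset.card_univ, Fintype.card_fin]
    · intro a1 h1 a2 h2 heq
      simp only [Finset.coe_filter, Set.mem_setOf_eq] at h1 h2
      obtain ⟨ha1, i1, hi1⟩ := h1
      obtain ⟨ha2, i2, hi2⟩ := h2
      have him : Finset.image a1 Finset.univ = Finset.image a2 Finset.univ := by
        have e1 : Finset.image a1 Finset.univ
            = insert x ((Finset.image a1 Finset.univ).erase x) :=
          (Finset.insert_erase (hi1 ▸ Finset.mem_image_of_mem a1 (Finset.mem_univ i1))).symm
        have e2 : Finset.image a2 Finset.univ
            = insert x ((Finset.image a2 Finset.univ).erase x) :=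
          (Finset.insert_erase (hi2 ▸ Finset.mem_image_of_mem a2 (Finset.mem_univ i2))).symm
        rw [e1, e2]
        exact congrArg (insert x) heq
      have hr : Set.range a1 = Set.range a2 := by
        have := congrArg (fun s : Finset (Fin n) => (s : Set (Fin n))) him
        simpa [Set.image_univ] using this
      exact ((strictMono_of_mem_incrs ha1).range_inj (strictMono_of_mem_incrs ha2)).mp hr
  rw [Finset.card_powersetCard, Finset.card_erase_of_mem (Finset.mem_univ x),
    Finset.card_univ, Fintype.card_fin] at hle
  exact hle

lemma card_nd_le :
    (((incrs k n) ×ˢ (incrs k n)).filter (fun p => ∃ i j, p.1 i = p.2 j)).card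
      ≤ n * ((n-1).choose (k-1))^2 := by
  classical
  have hsub : ((incrs k n) ×ˢ (incrs k n)).filter (fun p => ∃ i j, p.1 i = p.2 j)
      ⊆ (Finset.univ : Finset (Fin n)).biUnion (fun x =>
        ((incrs k n).filter (fun a => ∃ i, a i = x)) ×ˢ
          ((incrs k n).filter (fun a => ∃ i, a i = x))) := by
    intro p hp
    rw [Finset.mem_filter, Finset.mem_product] at hp
    obtain ⟨⟨hp1, hp2⟩, i, j, hij⟩ := hp
    rw [Finset.mem_biUnion]
    exact ⟨p.2 j, Finset.mem_univ _, by
      rw [Finset.mem_product, Finset.mem_filter, Finset.mem_filter]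
      exact ⟨⟨hp1, i, hij⟩, hp2, j, rfl⟩⟩
  calc (((incrs k n) ×ˢ (incrs k n)).filter (fun p => ∃ i j, p.1 i = p.2 j)).card
      ≤ _ := Finset.card_le_card hsub
    _ ≤ ∑ x : Fin n, (((incrs k n).filter (fun a => ∃ i, a i = x)) ×ˢ
          ((incrs k n).filter (fun a => ∃ i, a i = x))).card := Finset.card_biUnion_le
    _ ≤ ∑ _x : Fin n, ((n-1).choose (k-1))^2 := by
        apply Finset.sum_le_sum
        intro x _
        rw [Finset.card_product, sq]
        exact Nat.mul_le_mul (card_incrs_with x) (card_incrs_with x)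
    _ = n * ((n-1).choose (k-1))^2 := by
        rw [Finset.sum_const, Finset.card_univ, Fintype.card_fin, smul_eq_mul]


lemma patOcc_eq_sum (π : Perm (Fin n)) (σ : Perm (Fin k)) :
    patOcc π σ = ∑ a ∈ incrs k n, if π ∈ patSet σ a then 1 else 0 := by
  classical
  rw [patOcc, ← Finset.card_filter]
  congr 1
  rw [incrs, Finset.filter_filter]
  apply Finset.filter_congr
  intro a _
  simp [mem_patSet]

lemma sum_patOcc (σ : Perm (Fin k)) :
    (∑ π : Perm (Fin n), patOcc π σ) * k.factorial = n.choose k * n.factorial := by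
  classical
  have h1 : (∑ π : Perm (Fin n), patOcc π σ)
      = ∑ a ∈ incrs k n, (patSet σ a).card := by
    simp only [patOcc_eq_sum]
    rw [Finset.sum_comm]
    apply Finset.sum_congr rfl
    intro a _
    rw [Finset.sum_ite_mem]
    simp [Finset.univ_inter]
  rw [h1, Finset.sum_mul]
  rw [Finset.sum_congr rfl (fun a ha =>
    card_patSet_mul (strictMono_of_mem_incrs ha).injective σ)]
  rw [Finset.sum_const, smul_eq_mul, card_incrs]

lemma sum_patOcc_sq (σ : Perm (Fin k)) :
    (∑ π : Perm (Fin n), patOcc π σ * patOcc π σ) * (k.factorial * k.factorial)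
      ≤ (n.choose k * n.choose k) * n.factorial
        + (n * ((n-1).choose (k-1))^2) * (k.factorial * n.factorial) := by
  classical
  have h1 : (∑ π : Perm (Fin n), patOcc π σ * patOcc π σ)
      = ∑ p ∈ (incrs k n) ×ˢ (incrs k n), (patSet σ p.1 ∩ patSet σ p.2).card := by
    have hocc : ∀ π : Perm (Fin n), patOcc π σ * patOcc π σ
        = ∑ p ∈ (incrs k n) ×ˢ (incrs k n),
            if π ∈ patSet σ p.1 ∩ patSet σ p.2 then 1 else 0 := by
      intro π
      rw [patOcc_eq_sum, Finset.sum_mul_sum, Finset.sum_product]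
      apply Finset.sum_congr rfl
      intro a _
      apply Finset.sum_congr rfl
      intro b _
      by_cases h1 : π ∈ patSet σ a <;> by_cases h2 : π ∈ patSet σ b <;>
        simp [h1, h2, Finset.mem_inter]
    simp only [hocc]
    rw [Finset.sum_comm]
    apply Finset.sum_congr rfl
    intro p _
    rw [Finset.sum_ite_mem]
    simp [Finset.univ_inter]
  rw [h1, Finset.sum_mul]
  rw [← Finset.sum_filter_add_sum_filter_not ((incrs k n) ×ˢ (incrs k n))
    (fun p => ∃ i j, p.1 i = p.2 j)]
  have hnd : ∑ p ∈ ((incrs k n) ×ˢ (incrs k n)).filter (fun p => ∃ i j, p.1 i = p.2 j),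
      (patSet σ p.1 ∩ patSet σ p.2).card * (k.factorial * k.factorial)
      ≤ (n * ((n-1).choose (k-1))^2) * (k.factorial * n.factorial) := by
    calc _ ≤ ∑ _p ∈ ((incrs k n) ×ˢ (incrs k n)).filter (fun p => ∃ i j, p.1 i = p.2 j),
          k.factorial * n.factorial := by
          apply Finset.sum_le_sum
          intro p hp
          rw [Finset.mem_filter, Finset.mem_product] at hp
          have hs : (patSet σ p.1 ∩ patSet σ p.2).card ≤ (patSet σ p.1).card :=
            Finset.card_le_card Finset.inter_subset_left
          calc (patSet σ p.1 ∩ patSet σ p.2).card * (k.factorial * k.factorial)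
              = ((patSet σ p.1 ∩ patSet σ p.2).card * k.factorial) * k.factorial := by ring
            _ ≤ ((patSet σ p.1).card * k.factorial) * k.factorial := by
                exact Nat.mul_le_mul_right _ (Nat.mul_le_mul_right _ hs)
            _ = n.factorial * k.factorial := by
                rw [card_patSet_mul (strictMono_of_mem_incrs hp.1.1).injective σ]
            _ = k.factorial * n.factorial := by ring
      _ ≤ _ := by
          rw [Finset.sum_const, smul_eq_mul]
          exact Nat.mul_le_mul_right _ card_nd_le
  have hdj : ∑ p ∈ ((incrs k n) ×ˢ (incrs k n)).filter
        (fun p => ¬ ∃ i j, p.1 i = p.2 j),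
      (patSet σ p.1 ∩ patSet σ p.2).card * (k.factorial * k.factorial)
      ≤ (n.choose k * n.choose k) * n.factorial := by
    calc _ = ∑ _p ∈ ((incrs k n) ×ˢ (incrs k n)).filter
          (fun p => ¬ ∃ i j, p.1 i = p.2 j), n.factorial := by
          apply Finset.sum_congr rfl
          intro p hp
          rw [Finset.mem_filter, Finset.mem_product] at hp
          push_neg at hp
          exact card_inter_patSet_mul (strictMono_of_mem_incrs hp.1.1).injective
            (strictMono_of_mem_incrs hp.1.2).injective hp.2 σ σ
      _ ≤ ((incrs k n) ×ˢ (incrs k n)).card * n.factorial := by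
          rw [Finset.sum_const, smul_eq_mul]
          exact Nat.mul_le_mul_right _ (Finset.card_le_card (Finset.filter_subset _ _))
      _ = (n.choose k * n.choose k) * n.factorial := by
          rw [Finset.card_product, card_incrs]
  omega


lemma n_mul_choose (hk : 1 ≤ k) (hn1 : 1 ≤ n) :
    n * (n-1).choose (k-1) = n.choose k * k := by
  have h := Nat.add_one_mul_choose_eq (n-1) (k-1)
  simp only [Nat.succ_eq_add_one, Nat.sub_add_cancel hn1, Nat.sub_add_cancel hk] at h
  exact h

lemma sum_sq_le (hk : 1 ≤ k) (hn : k ≤ n) (hn1 : 1 ≤ n) (σ : Perm (Fin k)) :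
    ∑ π : Perm (Fin n), (patDens π σ - 1/(k.factorial:ℝ))^2
      ≤ (k:ℝ)^2 * (n.factorial:ℝ) / ((n:ℝ) * (k.factorial:ℝ)) := by
  classical
  set C : ℝ := (n.choose k : ℝ) with hCdef
  set K : ℝ := (k.factorial : ℝ) with hKdef
  set N : ℝ := (n.factorial : ℝ) with hNdef
  set C' : ℝ := ((n-1).choose (k-1) : ℝ) with hC'def
  have hC : (0:ℝ) < C := by
    rw [hCdef]
    exact_mod_cast Nat.choose_pos hn
  have hK : (0:ℝ) < K := by
    rw [hKdef]
    exact_mod_cast Nat.factorial_pos k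
  have hN : (0:ℝ) < N := by
    rw [hNdef]
    exact_mod_cast Nat.factorial_pos n
  have hn0 : (0:ℝ) < (n:ℝ) := by exact_mod_cast hn1
  have hsum1 : (∑ π : Perm (Fin n), (patOcc π σ : ℝ)) * K = C * N := by
    have h := sum_patOcc (n := n) σ
    rw [hKdef, hCdef, hNdef]
    exact_mod_cast h
  have hsum2 : (∑ π : Perm (Fin n), (patOcc π σ : ℝ) * (patOcc π σ : ℝ)) * (K*K)
      ≤ C*C*N + ((n:ℝ) * C'^2) * (K*N) := by
    have h := sum_patOcc_sq (n := n) σ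
    rw [hKdef, hCdef, hNdef, hC'def]
    exact_mod_cast h
  have hCid : (n:ℝ) * C' = C * (k:ℝ) := by
    have h := n_mul_choose (n := n) hk hn1
    rw [hC'def, hCdef]
    exact_mod_cast h
  have hterm : ∀ π : Perm (Fin n),
      (patDens π σ - 1/K)^2 = ((patOcc π σ:ℝ)*K - C)^2/(C*K)^2 := by
    intro π
    rw [patDens, ← hCdef]
    field_simp
  have hexp : ∑ π : Perm (Fin n), ((patOcc π σ:ℝ)*K - C)^2
      = (∑ π : Perm (Fin n), (patOcc π σ:ℝ)*(patOcc π σ:ℝ))*(K*K)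
        - 2*K*C*(∑ π : Perm (Fin n), (patOcc π σ:ℝ)) + N*(C*C) := by
    have e : ∀ x : ℝ, (x*K - C)^2 = x*x*(K*K) - 2*K*C*x + C*C := fun x => by ring
    simp only [e]
    rw [Finset.sum_add_distrib, Finset.sum_sub_distrib, ← Finset.sum_mul, ← Finset.mul_sum,
      Finset.sum_const, Finset.card_univ, Fintype.card_perm, Fintype.card_fin, nsmul_eq_mul,
      ← hNdef]
  have hmain : ∑ π : Perm (Fin n), ((patOcc π σ:ℝ)*K - C)^2 ≤ ((n:ℝ)*C'^2)*(K*N) := by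
    rw [hexp]
    have h2 : 2*K*C*(∑ π : Perm (Fin n), (patOcc π σ:ℝ)) = 2*C*(C*N) := by
      rw [← hsum1]
      ring
    linarith [hsum2]
  calc ∑ π : Perm (Fin n), (patDens π σ - 1/K)^2
      = (∑ π : Perm (Fin n), ((patOcc π σ:ℝ)*K - C)^2) / (C*K)^2 := by
        simp only [hterm]
        rw [Finset.sum_div]
    _ ≤ ((n:ℝ)*C'^2)*(K*N) / (C*K)^2 := by
        apply div_le_div_of_nonneg_right hmain ?_ |>.trans_eq rfl
        positivity
    _ = (k:ℝ)^2 * N / ((n:ℝ) * K) := by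
        have h2 : (n:ℝ)^2*C'^2 = (k:ℝ)^2*C^2 := by
          have := congrArg (fun t : ℝ => t^2) hCid
          simp only [mul_pow] at this
          linarith [this]
        rw [div_eq_div_iff (by positivity) (by positivity)]
        linear_combination (K^2*N)*h2


lemma card_bad_le (hk : 1 ≤ k) (hn : k ≤ n) (hn1 : 1 ≤ n) (σ : Perm (Fin k)) {ε : ℝ}
    (hε : 0 < ε) [DecidablePred fun π : Perm (Fin n) =>
      ε < |patDens π σ - 1/(k.factorial:ℝ)|] :
    ((Finset.univ.filter (fun π : Perm (Fin n) =>
        ε < |patDens π σ - 1/(k.factorial:ℝ)|)).card : ℝ) * ε^2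
      ≤ (k:ℝ)^2 * (n.factorial:ℝ) / ((n:ℝ) * (k.factorial:ℝ)) := by
  classical
  have h1 : ((Finset.univ.filter (fun π : Perm (Fin n) =>
      ε < |patDens π σ - 1/(k.factorial:ℝ)|)).card : ℝ) * ε^2
      ≤ ∑ π ∈ Finset.univ.filter (fun π : Perm (Fin n) =>
          ε < |patDens π σ - 1/(k.factorial:ℝ)|),
        (patDens π σ - 1/(k.factorial:ℝ))^2 := by
    have hb := Finset.card_nsmul_le_sum
      (Finset.univ.filter (fun π : Perm (Fin n) =>
        ε < |patDens π σ - 1/(k.factorial:ℝ)|))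
      (fun π => (patDens π σ - 1/(k.factorial:ℝ))^2) (ε^2) ?_
    · simpa [nsmul_eq_mul, mul_comm] using hb
    · intro π hπ
      rw [Finset.mem_filter] at hπ
      have h := hπ.2
      calc ε^2 ≤ |patDens π σ - 1/(k.factorial:ℝ)|^2 :=
            pow_le_pow_left₀ hε.le h.le 2
        _ = (patDens π σ - 1/(k.factorial:ℝ))^2 := sq_abs _
  have h2 : ∑ π ∈ Finset.univ.filter (fun π : Perm (Fin n) =>
        ε < |patDens π σ - 1/(k.factorial:ℝ)|),
      (patDens π σ - 1/(k.factorial:ℝ))^2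
      ≤ ∑ π : Perm (Fin n), (patDens π σ - 1/(k.factorial:ℝ))^2 :=
    Finset.sum_le_sum_of_subset_of_nonneg (Finset.filter_subset _ _)
      (fun _ _ _ => sq_nonneg _)
  exact h1.trans (h2.trans (sum_sq_le hk hn hn1 σ))

end ProfAux

open ProfAux in
/-- Law of large numbers for the `k`-profile. -/
theorem profile_tendsto_uniform (k : ℕ) :
    ∀ ε > (0 : ℝ),
      Filter.Tendsto
        (fun n : ℕ =>
          (Nat.card {π : Equiv.Perm (Fin n) //
              ε < dist (fun σ : Equiv.Perm (Fin k) => patDens π σ)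
                (fun _ : Equiv.Perm (Fin k) => 1 / (k.factorial : ℝ))} : ℝ)
            / (n.factorial : ℝ))
        Filter.atTop (nhds 0) := by
  classical
  intro ε hε
  rcases Nat.eq_zero_or_pos k with hk0 | hk
  · subst hk0
    have hzero : ∀ n : ℕ, Nat.card {π : Equiv.Perm (Fin n) //
        ε < dist (fun σ : Equiv.Perm (Fin 0) => patDens π σ)
          (fun _ : Equiv.Perm (Fin 0) => 1 / ((0:ℕ).factorial : ℝ))} = 0 := by
      intro n
      rw [Nat.card_eq_zero]
      left
      rw [isEmpty_subtype]
      intro π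
      have heq : (fun σ : Equiv.Perm (Fin 0) => patDens π σ)
          = (fun _ : Equiv.Perm (Fin 0) => 1 / ((0:ℕ).factorial : ℝ)) := by
        funext σ
        simp [patDens, patOcc, Finset.filter_true_of_mem, Nat.factorial]
      rw [heq, dist_self]
      linarith
    simp only [hzero, Nat.cast_zero, zero_div]
    exact tendsto_const_nhds
  · apply squeeze_zero' (g := fun n : ℕ => (k:ℝ)^2/ε^2 * (1/(n:ℝ)))
    · exact Filter.Eventually.of_forall (fun n => by positivity)
    · rw [Filter.eventually_atTop]
      refine ⟨max k 1, ?_⟩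
      intro n hnm
      have hn : k ≤ n := le_trans (le_max_left _ _) hnm
      have hn1 : 1 ≤ n := le_trans (le_max_right _ _) hnm
      have hn0 : (0:ℝ) < (n:ℝ) := by exact_mod_cast hn1
      have hN : (0:ℝ) < (n.factorial:ℝ) := by exact_mod_cast Nat.factorial_pos n
      have hK : (0:ℝ) < (k.factorial:ℝ) := by exact_mod_cast Nat.factorial_pos k
      -- identify Nat.card with a filter card
      have hcard : (Nat.card {π : Equiv.Perm (Fin n) //
          ε < dist (fun σ : Equiv.Perm (Fin k) => patDens π σ)
            (fun _ : Equiv.Perm (Fin k) => 1 / (k.factorial : ℝ))} : ℕ)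
          = (Finset.univ.filter (fun π : Equiv.Perm (Fin n) =>
              ε < dist (fun σ : Equiv.Perm (Fin k) => patDens π σ)
                (fun _ : Equiv.Perm (Fin k) => 1 / (k.factorial : ℝ)))).card := by
        rw [Nat.card_eq_fintype_card, Fintype.card_subtype]
      -- union bound
      have hsub : (Finset.univ.filter (fun π : Equiv.Perm (Fin n) =>
            ε < dist (fun σ : Equiv.Perm (Fin k) => patDens π σ)
              (fun _ : Equiv.Perm (Fin k) => 1 / (k.factorial : ℝ))))
          ⊆ (Finset.univ : Finset (Equiv.Perm (Fin k))).biUnion (fun σ =>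
              Finset.univ.filter (fun π : Equiv.Perm (Fin n) =>
                ε < |patDens π σ - 1/(k.factorial:ℝ)|)) := by
        intro π hπ
        rw [Finset.mem_filter] at hπ
        have hd := hπ.2
        have hex : ∃ σ : Equiv.Perm (Fin k), ε < |patDens π σ - 1/(k.factorial:ℝ)| := by
          by_contra hcon
          push_neg at hcon
          have : dist (fun σ : Equiv.Perm (Fin k) => patDens π σ)
              (fun _ : Equiv.Perm (Fin k) => 1 / (k.factorial : ℝ)) ≤ ε := by
            rw [dist_pi_le_iff hε.le]
            intro σ
            rw [Real.dist_eq]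
            exact hcon σ
          linarith
        obtain ⟨σ, hσ⟩ := hex
        rw [Finset.mem_biUnion]
        exact ⟨σ, Finset.mem_univ _, by rw [Finset.mem_filter]; exact ⟨Finset.mem_univ _, hσ⟩⟩
      have hbound : ((Finset.univ.filter (fun π : Equiv.Perm (Fin n) =>
            ε < dist (fun σ : Equiv.Perm (Fin k) => patDens π σ)
              (fun _ : Equiv.Perm (Fin k) => 1 / (k.factorial : ℝ)))).card : ℝ)
          ≤ (k.factorial : ℝ) * ((k:ℝ)^2 * (n.factorial:ℝ) / ((n:ℝ) * (k.factorial:ℝ) * ε^2)) := by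
        have hstep : ((Finset.univ.filter (fun π : Equiv.Perm (Fin n) =>
              ε < dist (fun σ : Equiv.Perm (Fin k) => patDens π σ)
                (fun _ : Equiv.Perm (Fin k) => 1 / (k.factorial : ℝ)))).card : ℕ)
            ≤ ∑ σ : Equiv.Perm (Fin k),
              (Finset.univ.filter (fun π : Equiv.Perm (Fin n) =>
                ε < |patDens π σ - 1/(k.factorial:ℝ)|)).card :=
          le_trans (Finset.card_le_card hsub) Finset.card_biUnion_le
        have hstep' : ((Finset.univ.filter (fun π : Equiv.Perm (Fin n) =>
              ε < dist (fun σ : Equiv.Perm (Fin k) => patDens π σ)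
                (fun _ : Equiv.Perm (Fin k) => 1 / (k.factorial : ℝ)))).card : ℝ)
            ≤ ∑ σ : Equiv.Perm (Fin k),
              ((Finset.univ.filter (fun π : Equiv.Perm (Fin n) =>
                ε < |patDens π σ - 1/(k.factorial:ℝ)|)).card : ℝ) := by
          exact_mod_cast hstep
        refine hstep'.trans ?_
        have hone : ∀ σ : Equiv.Perm (Fin k),
            ((Finset.univ.filter (fun π : Equiv.Perm (Fin n) =>
              ε < |patDens π σ - 1/(k.factorial:ℝ)|)).card : ℝ)
            ≤ (k:ℝ)^2 * (n.factorial:ℝ) / ((n:ℝ) * (k.factorial:ℝ) * ε^2) := by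
          intro σ
          have h := card_bad_le hk hn hn1 σ hε
          rw [div_mul_eq_div_div]
          rw [le_div_iff₀ (by positivity)]
          exact h
        calc ∑ σ : Equiv.Perm (Fin k), ((Finset.univ.filter (fun π : Equiv.Perm (Fin n) =>
              ε < |patDens π σ - 1/(k.factorial:ℝ)|)).card : ℝ)
            ≤ ∑ _σ : Equiv.Perm (Fin k),
              (k:ℝ)^2 * (n.factorial:ℝ) / ((n:ℝ) * (k.factorial:ℝ) * ε^2) :=
              Finset.sum_le_sum (fun σ _ => hone σ)
          _ = (k.factorial : ℝ) * ((k:ℝ)^2 * (n.factorial:ℝ)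
                / ((n:ℝ) * (k.factorial:ℝ) * ε^2)) := by
              rw [Finset.sum_const, Finset.card_univ, Fintype.card_perm, Fintype.card_fin,
                nsmul_eq_mul]
      rw [hcard]
      rw [div_le_iff₀ hN]
      calc ((Finset.univ.filter (fun π : Equiv.Perm (Fin n) =>
            ε < dist (fun σ : Equiv.Perm (Fin k) => patDens π σ)
              (fun _ : Equiv.Perm (Fin k) => 1 / (k.factorial : ℝ)))).card : ℝ)
          ≤ (k.factorial : ℝ) * ((k:ℝ)^2 * (n.factorial:ℝ)
              / ((n:ℝ) * (k.factorial:ℝ) * ε^2)) := hbound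
        _ = (k:ℝ)^2/ε^2 * (1/(n:ℝ)) * (n.factorial:ℝ) := by
            field_simp
    · have := Filter.Tendsto.const_mul ((k:ℝ)^2/ε^2) tendsto_one_div_atTop_nhds_zero_nat
      simpa using this
end

section
/- For k = 3 and l = 2, if a vector v ∈ ℝ^{S_3} satisfies that the sum of its entries over every two-sided coset of S_2 in S_3 vanishes, then v is a scalar multiple of the sign vector (sign σ)_{σ∈S_3}; conversely, the sign vector satisfies this property. -/
open Finset

lemma filter_eq : Finset.univ.filter (fun τ : Equiv.Perm (Fin 3) => τ 0 = 0)
    = {1, Equiv.swap 1 2} := by decide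

/-- For `k = 3`, `l = 2`: a vector `v ∈ ℝ^{S_3}` sums to zero over every two-sided coset
of `S_2 = {τ : τ 0 = 0}` in `S_3` if and only if `v` is a scalar multiple of the sign
vector. -/
theorem coset_sums_vanish_iff_sign (v : Equiv.Perm (Fin 3) → ℝ) :
    (∀ α β : Equiv.Perm (Fin 3),
        ∑ τ ∈ Finset.univ.filter (fun τ : Equiv.Perm (Fin 3) => τ 0 = 0),
          v (α * τ * β) = 0)
      ↔ ∃ c : ℝ, ∀ σ : Equiv.Perm (Fin 3),
          v σ = c * ((Equiv.Perm.sign σ : ℤ) : ℝ) := by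
  have hne : (1 : Equiv.Perm (Fin 3)) ≠ Equiv.swap 1 2 := by decide
  have hsum : ∀ α β : Equiv.Perm (Fin 3),
      ∑ τ ∈ Finset.univ.filter (fun τ : Equiv.Perm (Fin 3) => τ 0 = 0),
        v (α * τ * β) = v (α * β) + v (α * Equiv.swap 1 2 * β) := by
    intro α β
    rw [filter_eq, Finset.sum_pair hne, mul_one]
  constructor
  · intro h
    refine ⟨v 1, ?_⟩
    have key : ∀ α β, v (α * β) + v (α * Equiv.swap 1 2 * β) = 0 := by
      intro α β; rw [← hsum]; exact h α β
    intro σ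
    have h1 := key 1 1
    have h2 := key (Equiv.swap 0 1) (Equiv.swap 0 1)
    have h3 := key (Equiv.swap 0 2) (Equiv.swap 0 2)
    have h4 := key (Equiv.swap 0 1) 1
    have h5 := key (Equiv.swap 0 2) 1
    have e2 : Equiv.swap 0 1 * Equiv.swap 1 2 * Equiv.swap 0 1 = (Equiv.swap 0 2 : Equiv.Perm (Fin 3)) := by decide
    have e3 : Equiv.swap 0 2 * Equiv.swap 1 2 * Equiv.swap 0 2 = (Equiv.swap 0 1 : Equiv.Perm (Fin 3)) := by decide
    simp only [one_mul, mul_one] at h1 h2 h3 h4 h5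
    rw [e2] at h2
    rw [e3] at h3
    have hσ : σ = 1 ∨ σ = Equiv.swap 1 2 ∨ σ = Equiv.swap 0 1 ∨ σ = Equiv.swap 0 1 * Equiv.swap 1 2 ∨
        σ = Equiv.swap 0 2 ∨ σ = Equiv.swap 0 2 * Equiv.swap 1 2 := by revert σ; decide
    rcases hσ with rfl | rfl | rfl | rfl | rfl | rfl <;>
      simp [Equiv.Perm.sign_mul, Equiv.Perm.sign_swap', Equiv.swap_mul_self] at h2 h3 ⊢ <;> linarith
  · rintro ⟨c, hc⟩ α β
    rw [hsum]
    rw [hc, hc]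
    simp [Equiv.Perm.sign_swap (by decide : (1:Fin 3) ≠ 2)]
end
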